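/- Let g : [a,b] → [0,∞) be s-convex in the second sense for some s ∈ (0,1], a, b ∈ [0,∞), a < b, and integrable. Then (1/(b-a)) ∫_a^b g(x) dx ≤ (g(a)+g(b))/(s+1). -/

import Mathlib

open MeasureTheory Set

theorem hadamard_sconvex
    (a b s : ℝ) (ha : 0 ≤ a) (hb : 0 ≤ b) (hab : a < b)
    (hs : s ∈ Set.Ioc (0:ℝ) 1) (g : ℝ → ℝ)
    (hg0 : ∀ x ∈ Set.Icc a b, 0 ≤ g x)
    (hgs : ∀ x ∈ Set.Icc a b, ∀ y ∈ Set.Icc a b, ∀ l ∈ Set.Icc (0:ℝ) 1,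
      g (l * x + (1 - l) * y) ≤ l ^ s * g x + (1 - l) ^ s * g y)
    (hg : IntervalIntegrable g volume a b) :
    (1 / (b - a)) * ∫ x in a..b, g x ≤ (g a + g b) / (s + 1) := by
  obtain ⟨hs0, hs1⟩ := hs
  have hba : (0:ℝ) < b - a := sub_pos.2 hab
  have hs1' : (0:ℝ) < s + 1 := by linarith
  -- change of variables
  have hsub : (∫ t in (0:ℝ)..1, g ((b - a) * t + a))
      = (b - a)⁻¹ * ∫ x in a..b, g x := by
    rw [intervalIntegral.integral_comp_mul_add g hba.ne' a]
    norm_num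
  -- integrability of composed function
  have hint1 : IntervalIntegrable (fun t => g ((b - a) * t + a)) volume 0 1 := by
    have h1 := (hg.comp_add_right a).comp_mul_left (c := b - a)
    simpa [div_self hba.ne'] using h1
  have hrpow : IntervalIntegrable (fun t : ℝ => t ^ s) volume 0 1 :=
    intervalIntegral.intervalIntegrable_rpow (Or.inl hs0.le)
  have hrpow2 : IntervalIntegrable (fun t : ℝ => (1 - t) ^ s) volume 0 1 := by
    have := (intervalIntegral.intervalIntegrable_rpow (a := 0) (b := 1)
      (r := s) (Or.inl hs0.le)).comp_sub_left 1
    exact (by simpa using this : IntervalIntegrable (fun t : ℝ => (1 - t) ^ s) volume 1 0).symm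
  have hint2 : IntervalIntegrable (fun t : ℝ => t ^ s * g b + (1 - t) ^ s * g a)
      volume 0 1 := (hrpow.mul_const _).add (hrpow2.mul_const _)
  -- pointwise bound
  have hmono : (∫ t in (0:ℝ)..1, g ((b - a) * t + a))
      ≤ ∫ t in (0:ℝ)..1, t ^ s * g b + (1 - t) ^ s * g a := by
    apply intervalIntegral.integral_mono_on zero_le_one hint1 hint2
    intro t ht
    have := hgs b ⟨hab.le, le_refl b⟩ a ⟨le_refl a, hab.le⟩ t ht
    have heq : (b - a) * t + a = t * b + (1 - t) * a := by ring
    rw [heq]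
    exact this
  -- compute RHS integral
  have hI1 : (∫ t in (0:ℝ)..1, t ^ s) = 1 / (s + 1) := by
    rw [integral_rpow (Or.inl (by linarith : (-1:ℝ) < s))]
    rw [Real.one_rpow, Real.zero_rpow hs1'.ne']
    ring
  have hI2 : (∫ t in (0:ℝ)..1, (1 - t) ^ s) = 1 / (s + 1) := by
    have := intervalIntegral.integral_comp_sub_left (a := 0) (b := 1)
      (fun t : ℝ => t ^ s) 1
    simpa [this] using hI1
  have hRHS : (∫ t in (0:ℝ)..1, t ^ s * g b + (1 - t) ^ s * g a)
      = (g a + g b) / (s + 1) := by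
    rw [intervalIntegral.integral_add (hrpow.mul_const _) (hrpow2.mul_const _),
      intervalIntegral.integral_mul_const, intervalIntegral.integral_mul_const,
      hI1, hI2]
    ring
  calc (1 / (b - a)) * ∫ x in a..b, g x
      = ∫ t in (0:ℝ)..1, g ((b - a) * t + a) := by rw [hsub, one_div]
    _ ≤ ∫ t in (0:ℝ)..1, t ^ s * g b + (1 - t) ^ s * g a := hmono
    _ = (g a + g b) / (s + 1) := hRHS
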